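/- arXiv:1408.6766 — 4 statements merged into one kernel-verified Lean document; each statement's English description precedes it below -/
import Mathlib

section
/- In the group algebra C[S_n], the k-th elementary symmetric polynomial evaluated at the Jucys–Murphy elements J_1, ..., J_n equals the sum of all conjugacy class sums C_μ over partitions μ of n with colength ℓ*(μ) = n − ℓ(μ) equal to k; that is, e_k(J_1, ..., J_n) = ∑_{μ ⊢ n, ℓ*(μ)=k} C_μ. -/
open Finset

/-- The group algebra `ℂ[S_n]` of the symmetric group on `n` letters. -/
abbrev GroupAlg (n : ℕ) := MonoidAlgebra ℂ (Equiv.Perm (Fin n))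

/-- The Jucys–Murphy elements `J_b = ∑_{a < b} (a b)` of `ℂ[S_n]` (with `J_1 = 0`). -/
noncomputable def JM (n : ℕ) (b : Fin n) : GroupAlg n :=
  ∑ a ∈ Finset.univ.filter (fun a : Fin n => a < b),
    MonoidAlgebra.of ℂ (Equiv.Perm (Fin n)) (Equiv.swap a b)

/-- The class sum `C_μ ∈ ℂ[S_n]`: the sum of all permutations of cycle type `μ`. -/
noncomputable def classSum {n : ℕ} (μ : Nat.Partition n) : GroupAlg n :=
  ∑ σ ∈ Finset.univ.filter
      (fun σ : Equiv.Perm (Fin n) => σ.partition.parts = μ.parts),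
    MonoidAlgebra.of ℂ (Equiv.Perm (Fin n)) σ

/-- The `k`-th elementary symmetric polynomial evaluated at the Jucys–Murphy elements
`J_1, …, J_n` (the product over each subset is taken in increasing order, which is
immaterial since the Jucys–Murphy elements commute). -/
noncomputable def esymmJM (n k : ℕ) : GroupAlg n :=
  ∑ S ∈ (Finset.univ : Finset (Fin n)).powersetCard k,
    ((S.sort (· ≤ ·)).map (JM n)).prod

/-! ### Auxiliary material -/

open Equiv Equiv.Perm

section Join

variable {α : Type*} [DecidableEq α] [Fintype α]

/-- Right-multiplying a cycle `g` by a transposition `(a b)`, where `a` is in the support of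
`g` and `b` is not, joins `b` into the cycle. -/
lemma jm_join {g : Equiv.Perm α} (hg : g.IsCycle) {a b : α}
    (ha : a ∈ g.support) (hb : b ∉ g.support) :
    (g * Equiv.swap a b).IsCycle ∧
      (g * Equiv.swap a b).support = insert b g.support := by
  have hab : a ≠ b := ne_of_mem_of_not_mem ha hb
  have hga : g a ≠ a := mem_support.1 ha
  have hgb : g b = b := notMem_support.1 hb
  set h : Equiv.Perm α := g * Equiv.swap a b with hh
  have hha : h a = b := by simp [hh, mul_apply, swap_apply_left, hgb]
  have hhb : h b = g a := by simp [hh, mul_apply, swap_apply_right]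
  have hhx : ∀ x, x ≠ a → x ≠ b → h x = g x := by
    intro x hx1 hx2
    simp [hh, mul_apply, swap_apply_of_ne_of_ne hx1 hx2]
  have hgab : g a ≠ b := ne_of_mem_of_not_mem (apply_mem_support.2 ha) hb
  have hba : h.SameCycle b a := by
    refine (Equiv.Perm.SameCycle.symm ?_)
    exact ⟨1, by simpa using hha⟩
  have claim : ∀ k : ℕ, h.SameCycle b ((g ^ k) a) := by
    intro k
    induction k with
    | zero => simpa using hba
    | succ k ih =>
      by_cases hk : (g ^ k) a = a
      · refine ⟨1, ?_⟩
        rw [zpow_one, hhb, pow_succ', mul_apply, hk]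
      · have hy : (g ^ k) a ∈ g.support := pow_apply_mem_support.2 ha
        have hyb : (g ^ k) a ≠ b := ne_of_mem_of_not_mem hy hb
        refine ih.trans ⟨1, ?_⟩
        rw [zpow_one, hhx _ hk hyb, pow_succ', mul_apply]
  constructor
  · refine ⟨b, by rw [hhb]; exact hgab, fun y hy => ?_⟩
    by_cases hyb : y = b
    · rw [hyb]
    by_cases hya : y = a
    · rw [hya]; exact hba
    · have hgy : g y ≠ y := by rw [← hhx _ hya hyb]; exact hy
      obtain ⟨i, hi⟩ := hg.exists_pow_eq hga hgy
      exact hi ▸ claim i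
  · ext x
    by_cases hx : x = b
    · rw [hx]
      simp [mem_support, hhb, hgab]
    by_cases hxa : x = a
    · rw [hxa]
      simp [mem_support, hha, hab.symm, ha]
    · rw [mem_support, hhx _ hxa hx, Finset.mem_insert, ← mem_support]
      simp [hx]

/-- The key counting step: right-multiplying by a transposition `(a b)` where `b` is a fixed
point increases the colength by exactly one. -/
lemma jm_key (τ : Equiv.Perm α) {a b : α} (hab : a ≠ b) (hb : τ b = b) :
    (τ * Equiv.swap a b).support.card + Multiset.card τ.cycleType
      = τ.support.card + Multiset.card (τ * Equiv.swap a b).cycleType + 1 := by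
  by_cases ha : τ a = a
  · have hd : Equiv.Perm.Disjoint τ (Equiv.swap a b) := by
      intro x
      by_cases hx1 : x = a
      · exact Or.inl (hx1 ▸ ha)
      by_cases hx2 : x = b
      · exact Or.inl (hx2 ▸ hb)
      · exact Or.inr (swap_apply_of_ne_of_ne hx1 hx2)
    rw [hd.card_support_mul, hd.cycleType_mul, card_support_swap hab]
    have : Multiset.card (Equiv.swap a b).cycleType = 1 := by
      rw [(isCycle_swap hab).cycleType]; rfl
    rw [Multiset.card_add, this]
    omega
  · set g := τ.cycleOf a with hgdef
    have hgmem : g ∈ τ.cycleFactorsFinset :=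
      cycleOf_mem_cycleFactorsFinset_iff.mpr (mem_support.2 ha)
    have hd : Equiv.Perm.Disjoint (τ * g⁻¹) g :=
      disjoint_mul_inv_of_mem_cycleFactorsFinset hgmem
    have hgc : g.IsCycle := isCycle_cycleOf τ ha
    have hag : a ∈ g.support := by
      rw [mem_support, hgdef, cycleOf_apply_self]; exact ha
    have hbτ : b ∉ τ.support := notMem_support.2 hb
    have hbg : b ∉ g.support := fun hx => hbτ (support_cycleOf_le τ a hx)
    obtain ⟨hcyc, hsupp⟩ := jm_join hgc hag hbg
    have hfact : τ * g⁻¹ * g = τ := by group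
    have hτ'b : b ∉ (τ * g⁻¹).support := by
      intro hx
      exact hbτ (by rw [← hfact, hd.support_mul]; exact Finset.mem_union_left _ hx)
    have hdsupp : _root_.Disjoint (τ * g⁻¹).support g.support :=
      Equiv.Perm.disjoint_iff_disjoint_support.1 hd
    have hd2 : Equiv.Perm.Disjoint (τ * g⁻¹) (g * Equiv.swap a b) := by
      rw [Equiv.Perm.disjoint_iff_disjoint_support, hsupp,
        Finset.disjoint_insert_right]
      exact ⟨hτ'b, hdsupp⟩
    have hfact2 : τ * Equiv.swap a b = (τ * g⁻¹) * (g * Equiv.swap a b) := by group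
    have h1 := hd.cycleType_mul
    have h2 := hd2.cycleType_mul
    have h3 := hd.card_support_mul
    have h4 := hd2.card_support_mul
    rw [hfact] at h1 h3
    rw [← hfact2] at h2 h4
    have h5 : (g * Equiv.swap a b).support.card = g.support.card + 1 := by
      rw [hsupp, Finset.card_insert_of_notMem hbg]
    have h6 : Multiset.card (g * Equiv.swap a b).cycleType = 1 := by
      rw [hcyc.cycleType]; rfl
    have h7 : Multiset.card g.cycleType = 1 := by rw [hgc.cycleType]; rfl
    rw [h1, h2, Multiset.card_add, Multiset.card_add, h6, h7]
    omega

end Join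

section Sprod

variable {n : ℕ}

/-- Ordered product of the transpositions `(f c, c)` along a list. -/
def sprod (L : List (Fin n)) (f : Fin n → Fin n) : Equiv.Perm (Fin n) :=
  (L.map (fun c => Equiv.swap (f c) c)).prod

@[simp] lemma sprod_nil (f : Fin n → Fin n) : sprod [] f = 1 := rfl

lemma sprod_cons (c : Fin n) (L : List (Fin n)) (f : Fin n → Fin n) :
    sprod (c :: L) f = Equiv.swap (f c) c * sprod L f := by
  simp [sprod]

lemma sprod_append (L₁ L₂ : List (Fin n)) (f : Fin n → Fin n) :
    sprod (L₁ ++ L₂) f = sprod L₁ f * sprod L₂ f := by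
  simp [sprod]

lemma sprod_congr {L : List (Fin n)} {f g : Fin n → Fin n}
    (h : ∀ c ∈ L, f c = g c) : sprod L f = sprod L g := by
  induction L with
  | nil => rfl
  | cons c L ih =>
    rw [sprod_cons, sprod_cons, h c (List.mem_cons_self),
      ih (fun x hx => h x (List.mem_cons_of_mem _ hx))]

lemma sprod_refl (L : List (Fin n)) {f : Fin n → Fin n}
    (h : ∀ c ∈ L, f c = c) : sprod L f = 1 := by
  induction L with
  | nil => rfl
  | cons c L ih =>
    rw [sprod_cons, h c (List.mem_cons_self), Equiv.swap_self,
      ih (fun x hx => h x (List.mem_cons_of_mem _ hx))]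
    rfl

lemma sprod_apply_fix {L : List (Fin n)} {f : Fin n → Fin n} {x : Fin n}
    (hf : ∀ c ∈ L, f c ≤ c) (hx : ∀ c ∈ L, c < x) :
    sprod L f x = x := by
  induction L with
  | nil => rfl
  | cons c L ih =>
    rw [sprod_cons, mul_apply,
      ih (fun d hd => hf d (List.mem_cons_of_mem _ hd))
        (fun d hd => hx d (List.mem_cons_of_mem _ hd))]
    have h1 : x ≠ c := ne_of_gt (hx c (List.mem_cons_self))
    have h2 : x ≠ f c :=
      ne_of_gt (lt_of_le_of_lt (hf c (List.mem_cons_self)) (hx c (List.mem_cons_self)))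
    exact Equiv.swap_apply_of_ne_of_ne h2 h1

lemma sprod_filter {L : List (Fin n)} (p : Fin n → Prop) [DecidablePred p]
    {f : Fin n → Fin n} (h : ∀ c ∈ L, ¬ p c → f c = c) :
    sprod (L.filter (fun c => decide (p c))) f = sprod L f := by
  induction L with
  | nil => rfl
  | cons c L ih =>
    by_cases hc : p c
    · rw [List.filter_cons_of_pos (by simpa using hc), sprod_cons, sprod_cons,
        ih (fun d hd => h d (List.mem_cons_of_mem _ hd))]
    · rw [List.filter_cons_of_neg (by simpa using hc), sprod_cons,
        h c (List.mem_cons_self) hc, Equiv.swap_self,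
        ih (fun d hd => h d (List.mem_cons_of_mem _ hd))]
      exact (one_mul _).symm

/-- Sorting commutes with filtering. -/
lemma sort_filter (p : Fin n → Prop) [DecidablePred p] (s : Finset (Fin n)) :
    (s.sort (· ≤ ·)).filter (fun c => decide (p c)) = (s.filter p).sort (· ≤ ·) := by
  refine (fun h1 h2 => List.Perm.eq_of_pairwise' h2 (Finset.pairwise_sort _ _) h1) ?_ ?_
  · rw [← Multiset.coe_eq_coe, Finset.sort_eq, ← Multiset.filter_coe, Finset.sort_eq,
      ← Finset.filter_val]
  · exact (Finset.pairwise_sort _ _).sublist List.filter_sublist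

lemma support_card_sprod {L : List (Fin n)} (hL : L.Pairwise (· < ·))
    {f : Fin n → Fin n} (hf : ∀ c, f c ≤ c) :
    (sprod L f).support.card
      = (L.filter (fun c => decide (f c ≠ c))).length
          + Multiset.card (sprod L f).cycleType := by
  induction L using List.reverseRecOn with
  | nil => simp [sprod]
  | append_singleton L b ih =>
    have hpair := (List.pairwise_append.1 hL)
    have hLs : L.Pairwise (· < ·) := hpair.1
    have hlt : ∀ c ∈ L, c < b := fun c hc => hpair.2.2 c hc b (List.mem_singleton_self b)
    have hsplit : sprod (L ++ [b]) f = sprod L f * Equiv.swap (f b) b := by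
      rw [sprod_append, sprod_cons, sprod_nil, mul_one]
    by_cases hfb : f b = b
    · rw [hsplit, hfb, Equiv.swap_self]
      have h1 : (Equiv.refl (Fin n) : Equiv.Perm (Fin n)) = 1 := rfl
      rw [h1, mul_one, List.filter_append, List.length_append, ih hLs]
      simp [hfb]
    · have hbfix : (sprod L f) b = b :=
        sprod_apply_fix (fun c _ => hf c) hlt
      have hkey := jm_key (sprod L f) (a := f b) (b := b) hfb hbfix
      rw [hsplit]
      rw [List.filter_append, List.length_append]
      have h2 : (List.filter (fun c => decide (f c ≠ c)) [b]).length = 1 := by simp [hfb]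
      rw [h2, ih hLs] at *
      omega

/-- The permutation encoded by a code `f`. -/
def toPerm (f : Fin n → Fin n) : Equiv.Perm (Fin n) :=
  sprod (Finset.univ.sort (· ≤ ·)) f

lemma toPerm_update {f : Fin n → Fin n} {a b : Fin n} (hfb : f b = b)
    (habove : ∀ c, b < c → f c = c) :
    toPerm (Function.update f b a) = toPerm f * Equiv.swap a b := by
  obtain ⟨L₁, L₂, hsplit⟩ := List.append_of_mem
    (Finset.mem_sort (α := Fin n) (· ≤ ·) |>.2 (Finset.mem_univ b))
  have hsorted : ((Finset.univ : Finset (Fin n)).sort (· ≤ ·)).Pairwise (· < ·) :=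
    (Finset.sortedLT_sort _).pairwise
  rw [hsplit] at hsorted
  have hpair := List.pairwise_append.1 hsorted
  have hL1 : ∀ c ∈ L₁, c < b := fun c hc => hpair.2.2 c hc b (List.mem_cons_self)
  have hL2 : ∀ c ∈ L₂, b < c := fun c hc => (List.pairwise_cons.1 hpair.2.1).1 c hc
  have e1 : sprod L₂ f = 1 := sprod_refl _ (fun c hc => habove c (hL2 c hc))
  have e2 : sprod L₂ (Function.update f b a) = 1 := by
    refine sprod_refl _ (fun c hc => ?_)
    rw [Function.update_of_ne (ne_of_gt (hL2 c hc)), habove c (hL2 c hc)]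
  have e3 : sprod L₁ (Function.update f b a) = sprod L₁ f :=
    sprod_congr (fun c hc => Function.update_of_ne (ne_of_lt (hL1 c hc)) _ _)
  unfold toPerm
  rw [hsplit, sprod_append, sprod_append, sprod_cons, sprod_cons, e1, e2, e3,
    Function.update_self, hfb, Equiv.swap_self]
  have h1 : (Equiv.refl (Fin n) : Equiv.Perm (Fin n)) = 1 := rfl
  rw [h1]
  simp [mul_assoc]

lemma toPerm_surj_aux (m : ℕ) (σ : Equiv.Perm (Fin n))
    (hσ : ∀ x : Fin n, m ≤ x.val → σ x = x) :
    ∃ f : Fin n → Fin n, (∀ c, f c ≤ c) ∧ (∀ c : Fin n, m ≤ c.val → f c = c) ∧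
      toPerm f = σ := by
  induction m generalizing σ with
  | zero =>
    have h1 : σ = 1 := Equiv.ext fun x => hσ x (Nat.zero_le _)
    exact ⟨id, fun c => le_refl c, fun c _ => rfl, by
      rw [h1]; exact sprod_refl _ (fun c _ => rfl)⟩
  | succ m ih =>
    by_cases hmn : m < n
    · set b : Fin n := ⟨m, hmn⟩ with hbdef
      by_cases hsb : σ b = b
      · refine (ih σ (fun x hx => ?_)).imp
          (fun f hf => ⟨hf.1, fun c hc => hf.2.1 c (Nat.le_of_succ_le hc), hf.2.2⟩)
        rcases Nat.eq_or_lt_of_le hx with h | h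
        · have hxb : x = b := Fin.ext h.symm
          rw [hxb]; exact hsb
        · exact hσ x h
      · set a : Fin n := σ⁻¹ b with hadef
        have hab2 : σ a = b := Equiv.apply_symm_apply σ b
        have hab : a ≠ b := by intro h; rw [h] at hab2; exact hsb hab2
        have haval : a.val < m := by
          by_contra hge
          push_neg at hge
          rcases Nat.eq_or_lt_of_le hge with h' | h'
          · exact hab (Fin.ext h'.symm)
          · exact hab ((hσ a h').symm.trans hab2)
        have hableq : a < b := by
          rw [Fin.lt_def]
          exact haval
        set τ := σ * Equiv.swap a b with hτdef
        have hτ : ∀ x : Fin n, m ≤ x.val → τ x = x := by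
          intro x hx
          by_cases hxb : x = b
          · rw [hxb, hτdef, mul_apply, Equiv.swap_apply_right]
            exact hab2
          · have hx1 : m + 1 ≤ x.val := by
              rcases Nat.eq_or_lt_of_le hx with h' | h'
              · exact absurd (Fin.ext h'.symm : x = b) hxb
              · exact h'
            have hxa : x ≠ a := by
              intro h
              rw [h] at hx
              omega
            rw [hτdef, mul_apply, Equiv.swap_apply_of_ne_of_ne hxa hxb, hσ x hx1]
        obtain ⟨f, hf1, hf2, hf3⟩ := ih τ hτ
        refine ⟨Function.update f b a, ?_, ?_, ?_⟩
        · intro c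
          by_cases hc : c = b
          · rw [hc, Function.update_self]
            exact le_of_lt hableq
          · rw [Function.update_of_ne hc]
            exact hf1 c
        · intro c hc
          have hcb : c ≠ b := by
            intro h
            rw [h] at hc
            simp only [hbdef] at hc
            omega
          rw [Function.update_of_ne hcb]
          exact hf2 c (Nat.le_of_succ_le hc)
        · rw [toPerm_update (hf2 b (le_of_eq rfl))
            (fun c hc => hf2 c (le_of_lt (by rw [Fin.lt_def] at hc; exact hc))),
            hf3, hτdef, mul_assoc, Equiv.swap_mul_self, mul_one]
    · refine (ih σ (fun x hx =>
        absurd hx (not_le.2 (lt_of_lt_of_le x.isLt (le_of_not_gt hmn))))).imp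
        (fun f hf => ⟨hf.1, fun c hc => hf.2.1 c (Nat.le_of_succ_le hc), hf.2.2⟩)

lemma toPerm_surj (σ : Equiv.Perm (Fin n)) :
    ∃ f : Fin n → Fin n, (∀ c, f c ≤ c) ∧ toPerm f = σ := by
  obtain ⟨f, h1, _, h3⟩ := toPerm_surj_aux n σ (fun x hx => absurd x.isLt (not_lt.2 hx))
  exact ⟨f, h1, h3⟩

lemma card_amb :
    (Finset.univ.filter (fun f : Fin n → Fin n => ∀ c, f c ≤ c)).card
      = Fintype.card (Equiv.Perm (Fin n)) := by
  have h1 : Finset.univ.filter (fun f : Fin n → Fin n => ∀ c, f c ≤ c)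
      = Fintype.piFinset (fun b : Fin n => Finset.Iic b) := by
    ext f
    simp [Fintype.mem_piFinset]
  rw [h1, Fintype.card_piFinset]
  simp only [Fin.card_Iic]
  rw [Fintype.card_perm, Fintype.card_fin,
    Fin.prod_univ_eq_prod_range (fun i => i + 1) n]
  exact Finset.prod_range_add_one_eq_factorial n

lemma toPerm_injOn {f g : Fin n → Fin n} (hf : ∀ c, f c ≤ c) (hg : ∀ c, g c ≤ c)
    (h : toPerm f = toPerm g) : f = g := by
  classical
  have := Finset.inj_on_of_surj_on_of_card_le
    (s := Finset.univ.filter (fun f : Fin n → Fin n => ∀ c, f c ≤ c))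
    (t := (Finset.univ : Finset (Equiv.Perm (Fin n))))
    (fun f _ => toPerm f) (fun f _ => Finset.mem_univ _)
    (fun σ _ => by
      obtain ⟨f, h1, h2⟩ := toPerm_surj σ
      exact ⟨f, Finset.mem_filter.2 ⟨Finset.mem_univ _, h1⟩, h2⟩)
    (le_of_eq (by rw [card_amb, Finset.card_univ]))
  exact this (Finset.mem_filter.2 ⟨Finset.mem_univ _, hf⟩)
    (Finset.mem_filter.2 ⟨Finset.mem_univ _, hg⟩) h

lemma colength_toPerm {f : Fin n → Fin n} (hf : ∀ c, f c ≤ c) :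
    n - Multiset.card (toPerm f).partition.parts
      = (Finset.univ.filter (fun c => f c ≠ c)).card := by
  have hcnt := support_card_sprod ((Finset.sortedLT_sort (Finset.univ : Finset (Fin n))).pairwise) hf
  have hlen : (List.filter (fun c => decide (f c ≠ c))
      ((Finset.univ : Finset (Fin n)).sort (· ≤ ·))).length
      = (Finset.univ.filter (fun c => f c ≠ c)).card := by
    rw [sort_filter (fun c => f c ≠ c) Finset.univ, Finset.length_sort]
  have hparts : Multiset.card (toPerm f).partition.parts
      = Multiset.card (toPerm f).cycleType + (n - (toPerm f).support.card) := by
    rw [Equiv.Perm.parts_partition, Multiset.card_add, Multiset.card_replicate,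
      Fintype.card_fin]
  have hle : (toPerm f).support.card ≤ n := by
    simpa using Finset.card_le_univ (toPerm f).support
  unfold toPerm at hcnt hparts hle ⊢
  omega

/-- The cycle type of a permutation of `Fin n`, as a partition of `n`. -/
def permPartition (σ : Equiv.Perm (Fin n)) : Nat.Partition n where
  parts := σ.partition.parts
  parts_pos := σ.partition.parts_pos
  parts_sum := by rw [σ.partition.parts_sum, Fintype.card_fin]

/-- Expansion of an ordered product of Jucys–Murphy elements over codes. -/
lemma prod_JM_eq (L : List (Fin n)) (hnd : L.Nodup) :
    ((L.map (JM n)).prod : GroupAlg n) =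
      ∑ f ∈ Finset.univ.filter (fun f : Fin n → Fin n =>
          (∀ c ∈ L, f c < c) ∧ ∀ c, c ∉ L → f c = c),
        MonoidAlgebra.of ℂ (Equiv.Perm (Fin n)) (sprod L f) := by
  induction L with
  | nil =>
    have hset : (Finset.univ.filter (fun f : Fin n → Fin n =>
        (∀ c ∈ ([] : List (Fin n)), f c < c) ∧ ∀ c, c ∉ ([] : List (Fin n)) → f c = c))
        = {id} := by
      ext f
      simp [funext_iff]
    rw [hset]
    simp only [Finset.sum_singleton, List.map_nil, List.prod_nil, sprod_nil, map_one]
  | cons b L ih =>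
    have hbL : b ∉ L := (List.nodup_cons.1 hnd).1
    have hndL : L.Nodup := (List.nodup_cons.1 hnd).2
    rw [List.map_cons, List.prod_cons, ih hndL]
    show JM n b * _ = _
    rw [JM, Finset.sum_mul_sum, ← Finset.sum_product']
    refine Finset.sum_bij' (i := fun p _ => Function.update p.2 b p.1)
      (j := fun g _ => (g b, Function.update g b b)) ?_ ?_ ?_ ?_ ?_
    · rintro ⟨a, f⟩ hp
      dsimp only
      rw [Finset.mem_product, Finset.mem_filter, Finset.mem_filter] at hp
      obtain ⟨⟨_, ha⟩, _, hfL, hfout⟩ := hp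
      refine Finset.mem_filter.2 ⟨Finset.mem_univ _, ?_, ?_⟩
      · intro c hc
        rcases List.mem_cons.1 hc with h | h
        · rw [h, Function.update_self]; exact ha
        · have hcb : c ≠ b := fun he => hbL (he ▸ h)
          rw [Function.update_of_ne hcb]
          exact hfL c h
      · intro c hc
        have hcb : c ≠ b := fun he => hc (he ▸ List.mem_cons_self)
        rw [Function.update_of_ne hcb]
        exact hfout c (fun h => hc (List.mem_cons_of_mem _ h))
    · intro g hg
      rw [Finset.mem_filter] at hg
      obtain ⟨_, hgL, hgout⟩ := hg
      rw [Finset.mem_product, Finset.mem_filter, Finset.mem_filter]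
      refine ⟨⟨Finset.mem_univ _, hgL b (List.mem_cons_self)⟩, Finset.mem_univ _, ?_, ?_⟩
      · intro c hc
        have hcb : c ≠ b := by rintro rfl; exact hbL hc
        show Function.update g b b c < c
        rw [Function.update_of_ne hcb]
        exact hgL c (List.mem_cons_of_mem _ hc)
      · intro c hc
        show Function.update g b b c = c
        by_cases hcb : c = b
        · rw [hcb, Function.update_self]
        · rw [Function.update_of_ne hcb]
          exact hgout c (fun h => (List.mem_cons.1 h).elim hcb hc)
    · rintro ⟨a, f⟩ hp
      dsimp only
      rw [Finset.mem_product, Finset.mem_filter, Finset.mem_filter] at hp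
      obtain ⟨_, _, _, hfout⟩ := hp
      have hfb : f b = b := hfout b hbL
      have h2 : Function.update f b b = f := by
        have h3 := Function.update_eq_self b f
        rw [hfb] at h3
        exact h3
      show (Function.update f b a b, Function.update (Function.update f b a) b b) = (a, f)
      rw [Function.update_idem, Function.update_self, h2]
    · intro g hg
      dsimp only
      show Function.update (Function.update g b b) b (g b) = g
      rw [Function.update_idem]
      exact Function.update_eq_self b g
    · rintro ⟨a, f⟩ hp
      dsimp only
      rw [Finset.mem_product, Finset.mem_filter, Finset.mem_filter] at hp
      rw [sprod_cons, map_mul, Function.update_self,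
        sprod_congr (f := Function.update f b a) (g := f)
          (fun c hc => Function.update_of_ne (by rintro rfl; exact hbL hc) _ _)]

end Sprod

/-- Jucys: `e_k(J_1, …, J_n) = ∑_{μ ⊢ n, ℓ*(μ) = k} C_μ`, where
`ℓ*(μ) = n - ℓ(μ)` is the colength. -/
theorem esymm_jucysMurphy_eq_sum_classSums (n k : ℕ) :
    esymmJM n k =
      ∑ μ ∈ Finset.univ.filter
          (fun μ : Nat.Partition n => n - Multiset.card μ.parts = k),
        classSum μ := by
  classical
  -- Left-hand side: expand over codes.
  have hstep1 : ∀ S : Finset (Fin n), ((S.sort (· ≤ ·)).map (JM n)).prod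
      = ∑ f ∈ Finset.univ.filter (fun f : Fin n → Fin n =>
          (∀ c, f c ≤ c) ∧ Finset.univ.filter (fun c => f c ≠ c) = S),
        MonoidAlgebra.of ℂ (Equiv.Perm (Fin n)) (toPerm f) := by
    intro S
    rw [prod_JM_eq _ (Finset.sort_nodup _ _)]
    have hsets : Finset.univ.filter (fun f : Fin n → Fin n =>
          (∀ c ∈ S.sort (· ≤ ·), f c < c) ∧ ∀ c, c ∉ S.sort (· ≤ ·) → f c = c)
        = Finset.univ.filter (fun f : Fin n → Fin n =>
          (∀ c, f c ≤ c) ∧ Finset.univ.filter (fun c => f c ≠ c) = S) := by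
      apply Finset.filter_congr
      intro f _
      simp only [Finset.mem_sort]
      constructor
      · rintro ⟨h1, h2⟩
        constructor
        · intro c
          by_cases hc : c ∈ S
          · exact le_of_lt (h1 c hc)
          · exact le_of_eq (h2 c hc)
        · ext c
          simp only [Finset.mem_filter, Finset.mem_univ, true_and]
          constructor
          · intro hne
            by_contra hc
            exact hne (h2 c hc)
          · intro hc
            exact ne_of_lt (h1 c hc)
      · rintro ⟨h1, h2⟩
        have hmem : ∀ c : Fin n, f c ≠ c ↔ c ∈ S := by
          intro c
          rw [← h2]
          simp
        constructor
        · intro c hc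
          exact lt_of_le_of_ne (h1 c) ((hmem c).2 hc)
        · intro c hc
          by_contra hne
          exact hc ((hmem c).1 hne)
    rw [hsets]
    refine Finset.sum_congr rfl (fun f hf => ?_)
    rw [Finset.mem_filter] at hf
    obtain ⟨_, _, hsupp⟩ := hf
    congr 1
    have hSsort : S.sort (· ≤ ·)
        = ((Finset.univ : Finset (Fin n)).sort (· ≤ ·)).filter
            (fun c => decide (c ∈ S)) := by
      rw [sort_filter (fun c => c ∈ S) Finset.univ]
      congr 1
      ext c
      simp
    rw [hSsort, sprod_filter (fun c => c ∈ S)]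
    · rfl
    · intro c _ hc
      by_contra hne
      exact hc (by rw [← hsupp]; exact Finset.mem_filter.2 ⟨Finset.mem_univ _, hne⟩)
  rw [esymmJM]
  calc
    ∑ S ∈ (Finset.univ : Finset (Fin n)).powersetCard k,
        ((S.sort (· ≤ ·)).map (JM n)).prod
      = ∑ S ∈ (Finset.univ : Finset (Fin n)).powersetCard k,
          ∑ f ∈ Finset.univ.filter (fun f : Fin n → Fin n =>
            (∀ c, f c ≤ c) ∧ Finset.univ.filter (fun c => f c ≠ c) = S),
          MonoidAlgebra.of ℂ (Equiv.Perm (Fin n)) (toPerm f) :=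
        Finset.sum_congr rfl (fun S _ => hstep1 S)
    _ = ∑ f ∈ Finset.univ.filter (fun f : Fin n → Fin n =>
            (∀ c, f c ≤ c) ∧ (Finset.univ.filter (fun c => f c ≠ c)).card = k),
          MonoidAlgebra.of ℂ (Equiv.Perm (Fin n)) (toPerm f) := by
        have hmerge : ∀ S : Finset (Fin n),
            Finset.univ.filter (fun f : Fin n → Fin n =>
              (∀ c, f c ≤ c) ∧ Finset.univ.filter (fun c => f c ≠ c) = S)
            = (Finset.univ.filter (fun f : Fin n → Fin n => ∀ c, f c ≤ c)).filter
                (fun f => Finset.univ.filter (fun c => f c ≠ c) = S) := by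
          intro S
          rw [Finset.filter_filter]
        simp only [hmerge]
        rw [Finset.sum_fiberwise_eq_sum_filter, Finset.filter_filter]
        apply Finset.sum_congr
        · apply Finset.filter_congr
          intro f _
          simp [Finset.mem_powersetCard_univ]
        · intros; rfl
    _ = ∑ σ ∈ Finset.univ.filter
            (fun σ : Equiv.Perm (Fin n) => n - Multiset.card σ.partition.parts = k),
          MonoidAlgebra.of ℂ (Equiv.Perm (Fin n)) σ := by
        refine Finset.sum_bij (fun f _ => toPerm f) ?_ ?_ ?_ ?_
        · intro f hf
          rw [Finset.mem_filter] at hf ⊢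
          exact ⟨Finset.mem_univ _, by rw [colength_toPerm hf.2.1]; exact hf.2.2⟩
        · intro f hf g hg h
          rw [Finset.mem_filter] at hf hg
          exact toPerm_injOn hf.2.1 hg.2.1 h
        · intro σ hσ
          rw [Finset.mem_filter] at hσ
          obtain ⟨f, h1, h2⟩ := toPerm_surj σ
          refine ⟨f, Finset.mem_filter.2 ⟨Finset.mem_univ _, h1, ?_⟩, h2⟩
          rw [← colength_toPerm h1, h2]
          exact hσ.2
        · intros; rfl
    _ = ∑ μ ∈ Finset.univ.filter
          (fun μ : Nat.Partition n => n - Multiset.card μ.parts = k),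
        classSum μ := by
        simp only [classSum]
        have hfib : ∀ μ : Nat.Partition n,
            Finset.univ.filter
              (fun σ : Equiv.Perm (Fin n) => σ.partition.parts = μ.parts)
            = Finset.univ.filter (fun σ : Equiv.Perm (Fin n) => permPartition σ = μ) := by
          intro μ
          apply Finset.filter_congr
          intro σ _
          constructor
          · exact fun h => Nat.Partition.ext h
          · exact fun h => congrArg Nat.Partition.parts h
        simp only [hfib]
        rw [Finset.sum_fiberwise_eq_sum_filter]
        apply Finset.sum_congr
        · apply Finset.filter_congr
          intro σ _
          simp only [Finset.mem_filter, Finset.mem_univ, true_and]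
          exact Iff.rfl
        · intros; rfl
end

section
/- Every symmetric polynomial in the Jucys–Murphy elements J_1, ..., J_n lies in the center Z(C[S_n]) of the group algebra of the symmetric group S_n. -/
open Finset

/-- Substitution of the Jucys–Murphy elements `J_1, …, J_n` into a multivariate
polynomial `f` (monomials are expanded as ordered products `J_1^{m_1} ⋯ J_n^{m_n}`,
which is immaterial since the Jucys–Murphy elements commute). -/
noncomputable def evalJM {n : ℕ} (f : MvPolynomial (Fin n) ℂ) : GroupAlg n :=
  ∑ m ∈ f.support,
    f.coeff m • ((List.finRange n).map (fun i => JM n i ^ m i)).prod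

namespace JMAux

variable {n : ℕ}

/-- shorthand for the canonical group embedding -/
noncomputable def og {n : ℕ} (g : Equiv.Perm (Fin n)) : GroupAlg n :=
  MonoidAlgebra.of ℂ (Equiv.Perm (Fin n)) g

lemma og_mul (a b : Equiv.Perm (Fin n)) : og (a * b) = og a * og b := map_mul _ _ _

lemma og_one : og (1 : Equiv.Perm (Fin n)) = 1 := map_one _

lemma JM_def (b : Fin n) :
    JM n b = ∑ a ∈ Finset.univ.filter (fun a : Fin n => a < b), og (Equiv.swap a b) := rfl

/-- If `σ` fixes `b` and preserves `{y | y < b}`, then `σ` commutes with `J_b`. -/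
lemma og_comm_JM (σ : Equiv.Perm (Fin n)) (b : Fin n) (hb : σ b = b)
    (h : ∀ y : Fin n, y < b → σ y < b) :
    og σ * JM n b = JM n b * og σ := by
  classical
  set F := Finset.univ.filter (fun a : Fin n => a < b) with hF
  have himg : F.image σ = F := by
    apply Finset.eq_of_subset_of_card_le
    · intro x hx
      obtain ⟨y, hy, rfl⟩ := Finset.mem_image.1 hx
      simp only [hF, Finset.mem_filter, Finset.mem_univ, true_and] at hy ⊢
      exact h y hy
    · rw [Finset.card_image_of_injective _ σ.injective]
  rw [JM_def, Finset.mul_sum, Finset.sum_mul]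
  refine Finset.sum_nbij' (fun a => σ a) (fun a => σ⁻¹ a) ?_ ?_ ?_ ?_ ?_
  · intro a ha
    simp only [hF, Finset.mem_filter, Finset.mem_univ, true_and] at ha ⊢
    exact h a ha
  · intro a ha
    rw [← hF] at ha ⊢
    rw [← himg] at ha
    obtain ⟨x, hx, rfl⟩ := Finset.mem_image.1 ha
    simpa using hx
  · intro a _; simp
  · intro a _; simp
  · intro a _
    rw [← og_mul, ← og_mul]
    congr 1
    have h1 : Equiv.swap (σ a) (σ b) = σ * Equiv.swap a b * σ⁻¹ :=
      Equiv.swap_apply_apply σ a b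
    rw [hb] at h1
    rw [h1, inv_mul_cancel_right]

lemma JM_comm (a b : Fin n) : JM n a * JM n b = JM n b * JM n a := by
  classical
  suffices H : ∀ a b : Fin n, a < b → JM n a * JM n b = JM n b * JM n a by
    rcases lt_trichotomy a b with h | h | h
    · exact H a b h
    · rw [h]
    · exact (H b a h).symm
  intro a b hab
  conv_lhs => rw [JM_def a]
  conv_rhs => rw [JM_def a]
  rw [Finset.sum_mul, Finset.mul_sum]
  refine Finset.sum_congr rfl fun x hx => ?_
  have hx' : x < a := by simpa using hx
  have hxb : x < b := hx'.trans hab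
  refine og_comm_JM (Equiv.swap x a) b
    (Equiv.swap_apply_of_ne_of_ne hxb.ne' hab.ne') (fun y hy => ?_)
  rcases eq_or_ne y x with rfl | h1
  · rw [Equiv.swap_apply_left]; exact hab
  rcases eq_or_ne y a with rfl | h2
  · rw [Equiv.swap_apply_right]; exact hxb
  · rw [Equiv.swap_apply_of_ne_of_ne h1 h2]; exact hy

/-- The (commutative) subalgebra generated by the Jucys–Murphy elements. -/
noncomputable abbrev JMsub (n : ℕ) : Subalgebra ℂ (GroupAlg n) := Algebra.adjoin ℂ (Set.range (JM n))

noncomputable instance instJMsubCommRing : CommRing (JMsub n) :=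
  Algebra.adjoinCommRingOfComm ℂ (by
    rintro _ ⟨a, rfl⟩ _ ⟨b, rfl⟩
    exact JM_comm a b)

noncomputable def Jalg (n : ℕ) (b : Fin n) : JMsub n :=
  ⟨JM n b, Algebra.subset_adjoin ⟨b, rfl⟩⟩

lemma val_Jalg (b : Fin n) : ((Jalg n b : JMsub n) : GroupAlg n) = JM n b := rfl



variable {n : ℕ}

lemma evalJM_eq (f : MvPolynomial (Fin n) ℂ) :
    evalJM f = (JMsub n).val (MvPolynomial.aeval (Jalg n) f) := by
  rw [MvPolynomial.aeval_def, MvPolynomial.eval₂_eq', map_sum]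
  refine Finset.sum_congr rfl fun d _ => ?_
  rw [map_mul, AlgHom.commutes, Fin.prod_univ_def, map_list_prod, List.map_map,
    ← Algebra.smul_def]
  congr 1

section Relations

variable (i j : Fin n) (hij : (j : ℕ) = (i : ℕ) + 1)

lemma swap_sq : og (Equiv.swap i j) * og (Equiv.swap i j) = 1 := by
  rw [← og_mul, Equiv.swap_mul_self, og_one]

include hij in
lemma filter_lt_succ :
    Finset.univ.filter (fun a : Fin n => a < j)
      = insert i (Finset.univ.filter (fun a : Fin n => a < i)) := by
  ext a
  simp only [Finset.mem_filter, Finset.mem_univ, true_and, Finset.mem_insert,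
    Fin.lt_def, Fin.ext_iff, hij]
  omega

include hij in
lemma swap_key (a : Fin n) (hai : a < i) :
    Equiv.swap a j * Equiv.swap i j = Equiv.swap i j * Equiv.swap a i := by
  have hij' : i ≠ j := by
    rw [Fin.ne_iff_vne]; omega
  have hai' : a ≠ i := hai.ne
  have haj : a ≠ j := by
    rw [Fin.ne_iff_vne]; rw [Fin.lt_def] at hai; omega
  have h1 : Equiv.swap ((Equiv.swap i j) a) ((Equiv.swap i j) i)
      = Equiv.swap i j * Equiv.swap a i * (Equiv.swap i j)⁻¹ :=
    Equiv.swap_apply_apply _ a i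
  rw [Equiv.swap_apply_of_ne_of_ne hai' haj, Equiv.swap_apply_left, Equiv.swap_inv] at h1
  rw [h1, mul_assoc _ _ (Equiv.swap i j), Equiv.swap_mul_self, mul_one]

include hij in
lemma R1 : og (Equiv.swap i j) * JM n i + 1 = JM n j * og (Equiv.swap i j) := by
  rw [JM_def j, JM_def i, Finset.sum_mul, Finset.mul_sum,
    filter_lt_succ i j hij, Finset.sum_insert (by simp)]
  rw [← og_mul, Equiv.swap_mul_self, og_one]
  rw [add_comm]
  congr 1
  refine Finset.sum_congr rfl fun a ha => ?_
  have hai : a < i := by simpa using ha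
  rw [← og_mul, ← og_mul, swap_key i j hij a hai]

include hij in
lemma R2 : JM n i * og (Equiv.swap i j) + 1 = og (Equiv.swap i j) * JM n j := by
  rw [JM_def j, JM_def i, Finset.sum_mul, Finset.mul_sum,
    filter_lt_succ i j hij, Finset.sum_insert (by simp)]
  rw [← og_mul, Equiv.swap_mul_self, og_one]
  rw [add_comm]
  congr 1
  refine Finset.sum_congr rfl fun a ha => ?_
  have hai : a < i := by simpa using ha
  rw [← og_mul, ← og_mul]
  congr 1
  have := swap_key i j hij a hai
  -- swap a j * swap i j = swap i j * swap a i  ⇒  swap i j * swap a j = swap a i * swap i j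
  have h2 : Equiv.swap i j * (Equiv.swap a j * Equiv.swap i j) * Equiv.swap i j
      = Equiv.swap i j * (Equiv.swap i j * Equiv.swap a i) * Equiv.swap i j := by rw [this]
  have h3 : Equiv.swap i j * Equiv.swap a j = Equiv.swap a i * Equiv.swap i j := by
    calc Equiv.swap i j * Equiv.swap a j
        = Equiv.swap i j * (Equiv.swap a j * Equiv.swap i j) * Equiv.swap i j := by
          rw [mul_assoc, mul_assoc, Equiv.swap_mul_self, mul_one]
      _ = Equiv.swap i j * (Equiv.swap i j * Equiv.swap a i) * Equiv.swap i j := h2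
      _ = Equiv.swap a i * Equiv.swap i j := by
          rw [← mul_assoc, Equiv.swap_mul_self, one_mul]
  exact h3.symm

include hij in
lemma swap_comm_sum :
    og (Equiv.swap i j) * (JM n i + JM n j) = (JM n i + JM n j) * og (Equiv.swap i j) := by
  have e1 : og (Equiv.swap i j) * JM n i = JM n j * og (Equiv.swap i j) - 1 :=
    eq_sub_of_add_eq (R1 i j hij)
  have e2 : og (Equiv.swap i j) * JM n j = JM n i * og (Equiv.swap i j) + 1 :=
    (R2 i j hij).symm
  rw [mul_add, add_mul, e1, e2]
  abel

include hij in
lemma swap_comm_prod :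
    og (Equiv.swap i j) * (JM n i * JM n j) = (JM n i * JM n j) * og (Equiv.swap i j) := by
  have e1 : og (Equiv.swap i j) * JM n i = JM n j * og (Equiv.swap i j) - 1 :=
    eq_sub_of_add_eq (R1 i j hij)
  have e2 : og (Equiv.swap i j) * JM n j = JM n i * og (Equiv.swap i j) + 1 :=
    (R2 i j hij).symm
  calc og (Equiv.swap i j) * (JM n i * JM n j)
      = (og (Equiv.swap i j) * JM n i) * JM n j := by rw [mul_assoc]
    _ = (JM n j * og (Equiv.swap i j) - 1) * JM n j := by rw [e1]
    _ = JM n j * (og (Equiv.swap i j) * JM n j) - JM n j := by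
        rw [sub_mul, one_mul, mul_assoc]
    _ = JM n j * (JM n i * og (Equiv.swap i j) + 1) - JM n j := by rw [e2]
    _ = (JM n j * JM n i) * og (Equiv.swap i j) := by
        rw [mul_add, mul_one, add_sub_cancel_right, mul_assoc]
    _ = (JM n i * JM n j) * og (Equiv.swap i j) := by rw [JM_comm]

include hij in
lemma swap_comm_other (b : Fin n) (hbi : b ≠ i) (hbj : b ≠ j) :
    og (Equiv.swap i j) * JM n b = JM n b * og (Equiv.swap i j) := by
  have hij' : i ≠ j := by rw [Fin.ne_iff_vne]; omega
  refine og_comm_JM _ b (Equiv.swap_apply_of_ne_of_ne hbi hbj) (fun y hy => ?_)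
  rw [Fin.lt_def] at hy ⊢
  rcases eq_or_ne y i with rfl | h1
  · rw [Equiv.swap_apply_left, hij]
    have : (b : ℕ) ≠ (j : ℕ) := fun h => hbj (Fin.ext h)
    omega
  rcases eq_or_ne y j with rfl | h2
  · rw [Equiv.swap_apply_right]
    omega
  · rw [Equiv.swap_apply_of_ne_of_ne h1 h2]
    exact hy

end Relations

lemma esymm_zero' {R : Type*} [CommRing R] (m : Multiset R) : m.esymm 0 = 1 := by
  simp [Multiset.esymm]

lemma esymm_cons' {R : Type*} [CommRing R] (a : R) (m : Multiset R) (k : ℕ) :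
    (a ::ₘ m).esymm (k + 1) = m.esymm (k + 1) + a * m.esymm k := by
  rw [Multiset.esymm, Multiset.powersetCard_cons, Multiset.map_add, Multiset.sum_add,
    Multiset.map_map]
  congr 1
  simp only [Function.comp_def, Multiset.prod_cons]
  rw [Multiset.sum_map_mul_left]
  rfl

lemma esymm_mem (B : Subalgebra ℂ (JMsub n)) (i j : Fin n) (hij : i ≠ j)
    (hmem : ∀ b : Fin n, b ≠ i → b ≠ j → Jalg n b ∈ B)
    (hu : Jalg n i + Jalg n j ∈ B) (hv : Jalg n i * Jalg n j ∈ B) (k : ℕ) :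
    MvPolynomial.aeval (Jalg n) (MvPolynomial.esymm (Fin n) ℂ k) ∈ B := by
  classical
  rw [MvPolynomial.aeval_esymm_eq_multiset_esymm]
  set m0 : Multiset (JMsub n) := ((Finset.univ.erase i).erase j).val.map (Jalg n) with hm0def
  have h1 : (Finset.univ : Finset (Fin n)).val = i ::ₘ (Finset.univ.erase i).val := by
    rw [Finset.erase_val]
    exact (Multiset.cons_erase (by simp)).symm
  have h2 : (Finset.univ.erase i).val = j ::ₘ ((Finset.univ.erase i).erase j).val := by
    rw [Finset.erase_val ((Finset.univ.erase i))]
    exact (Multiset.cons_erase ((Multiset.mem_erase_of_ne hij.symm).2 (Finset.mem_def.1 (Finset.mem_univ j)))).symm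
  have hdecomp : (Finset.univ.val.map (Jalg n)) = Jalg n i ::ₘ Jalg n j ::ₘ m0 := by
    rw [h1, h2, Multiset.map_cons, Multiset.map_cons]
  have hm0 : ∀ x ∈ m0, x ∈ B := by
    intro x hx
    obtain ⟨b, hb, rfl⟩ := Multiset.mem_map.1 hx
    have hb' := Finset.mem_erase.1 (show b ∈ (Finset.univ.erase i).erase j from hb)
    have hb'' := Finset.mem_erase.1 hb'.2
    exact hmem b hb''.1 hb'.1
  have hB0 : ∀ t, m0.esymm t ∈ B := by
    intro t
    refine multiset_sum_mem _ (fun p hp => ?_)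
    obtain ⟨u, hu', rfl⟩ := Multiset.mem_map.1 hp
    exact multiset_prod_mem _ (fun x hx =>
      hm0 x (Multiset.mem_of_le (Multiset.mem_powersetCard.1 hu').1 hx))
  rw [hdecomp]
  rcases k with _ | _ | t
  · rw [esymm_zero']
    exact one_mem B
  · show (Jalg n i ::ₘ Jalg n j ::ₘ m0).esymm (0 + 1) ∈ B
    rw [esymm_cons' (Jalg n i) _ 0, esymm_cons' (Jalg n j) m0 0]
    simp only [esymm_zero', mul_one]
    rw [add_assoc, add_comm (Jalg n j) (Jalg n i)]
    exact add_mem (hB0 _) hu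
  · show (Jalg n i ::ₘ Jalg n j ::ₘ m0).esymm (t + 1 + 1) ∈ B
    rw [esymm_cons' (Jalg n i) _ (t + 1), esymm_cons' (Jalg n j) m0 (t + 1),
      esymm_cons' (Jalg n j) m0 t]
    have : m0.esymm (t + 1 + 1) + Jalg n j * m0.esymm (t + 1)
          + Jalg n i * (m0.esymm (t + 1) + Jalg n j * m0.esymm t)
        = m0.esymm (t + 1 + 1) + (Jalg n i + Jalg n j) * m0.esymm (t + 1)
          + (Jalg n i * Jalg n j) * m0.esymm t := by
      rw [mul_add, add_mul, mul_assoc]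
      abel
    rw [this]
    exact add_mem (add_mem (hB0 _) (mul_mem hu (hB0 _))) (mul_mem hv (hB0 _))

lemma swap_comm_esymm (i j : Fin n) (hij : (j : ℕ) = (i : ℕ) + 1) (k : ℕ) :
    og (Equiv.swap i j)
        * (JMsub n).val (MvPolynomial.aeval (Jalg n) (MvPolynomial.esymm (Fin n) ℂ k))
      = (JMsub n).val (MvPolynomial.aeval (Jalg n) (MvPolynomial.esymm (Fin n) ℂ k))
        * og (Equiv.swap i j) := by
  have hij' : i ≠ j := by rw [Fin.ne_iff_vne]; omega
  set B : Subalgebra ℂ (JMsub n) :=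
    (Subalgebra.centralizer ℂ {og (Equiv.swap i j)}).comap (JMsub n).val with hB
  have hBiff : ∀ x : JMsub n, x ∈ B ↔
      og (Equiv.swap i j) * (JMsub n).val x = (JMsub n).val x * og (Equiv.swap i j) := by
    intro x
    simp [hB, Subalgebra.mem_comap, Subalgebra.mem_centralizer_iff]
  have key : MvPolynomial.aeval (Jalg n) (MvPolynomial.esymm (Fin n) ℂ k) ∈ B := by
    refine esymm_mem B i j hij' ?_ ?_ ?_ k
    · intro b hbi hbj
      rw [hBiff]
      exact swap_comm_other i j hij b hbi hbj
    · rw [hBiff, map_add]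
      exact swap_comm_sum i j hij
    · rw [hBiff, map_mul]
      exact swap_comm_prod i j hij
  exact (hBiff _).1 key

lemma og_comm_of_adjacent {x : GroupAlg n}
    (hx : ∀ i j : Fin n, (j : ℕ) = (i : ℕ) + 1 →
      og (Equiv.swap i j) * x = x * og (Equiv.swap i j))
    (g : Equiv.Perm (Fin n)) : og g * x = x * og g := by
  cases n with
  | zero => rw [Subsingleton.elim g 1, og_one, one_mul, mul_one]
  | succ m =>
    have hg : g ∈ Submonoid.closure
        (Set.range fun t : Fin m => Equiv.swap t.castSucc t.succ) := by
      rw [Equiv.Perm.mclosure_swap_castSucc_succ]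
      exact Submonoid.mem_top g
    induction hg using Submonoid.closure_induction with
    | mem y hy =>
      obtain ⟨t, rfl⟩ := hy
      exact hx t.castSucc t.succ (by simp)
    | one => rw [og_one, one_mul, mul_one]
    | mul a b ha hb iha ihb =>
      rw [og_mul, mul_assoc, ihb, ← mul_assoc, iha, mul_assoc]

lemma central_of_og_comm {x : GroupAlg n}
    (h : ∀ g : Equiv.Perm (Fin n), og g * x = x * og g) :
    x ∈ Subalgebra.center ℂ (GroupAlg n) := by
  rw [Subalgebra.mem_center_iff]
  intro y
  induction y using MonoidAlgebra.induction_on with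
  | of g => exact h g
  | add f g hf hg => rw [add_mul, mul_add, hf, hg]
  | smul r f hf => rw [smul_mul_assoc, mul_smul_comm, hf]

end JMAux

/-- every symmetric polynomial in the Jucys–Murphy elements lies in
the center `Z(ℂ[S_n])`. -/
theorem symmetric_jucysMurphy_mem_center {n : ℕ} (f : MvPolynomial (Fin n) ℂ)
    (hf : f.IsSymmetric) :
    evalJM f ∈ Subalgebra.center ℂ (GroupAlg n) := by
  classical
  obtain ⟨g, hg⟩ := MvPolynomial.esymmAlgHom_surjective (σ := Fin n) (R := ℂ) (n := n)
    (by simp) ⟨f, (MvPolynomial.mem_symmetricSubalgebra f).2 hf⟩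
  have hf' : f = MvPolynomial.aeval
      (fun t : Fin n => MvPolynomial.esymm (Fin n) ℂ ((t : ℕ) + 1)) g := by
    have h1 := congrArg Subtype.val hg
    rw [MvPolynomial.esymmAlgHom_apply] at h1
    exact h1.symm
  rw [JMAux.evalJM_eq, hf']
  have hcomp := DFunLike.congr_fun
    (MvPolynomial.comp_aeval
      (f := fun t : Fin n => MvPolynomial.esymm (Fin n) ℂ ((t : ℕ) + 1))
      (φ := MvPolynomial.aeval (JMAux.Jalg n))) g
  rw [AlgHom.comp_apply] at hcomp
  rw [hcomp]
  set Z : Subalgebra ℂ (JMAux.JMsub n) :=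
    (Subalgebra.center ℂ (GroupAlg n)).comap (JMAux.JMsub n).val with hZ
  have hpts : ∀ t : Fin n,
      (MvPolynomial.aeval (JMAux.Jalg n)) (MvPolynomial.esymm (Fin n) ℂ ((t : ℕ) + 1)) ∈ Z := by
    intro t
    rw [hZ, Subalgebra.mem_comap]
    exact JMAux.central_of_og_comm (JMAux.og_comm_of_adjacent (fun i j hij =>
      JMAux.swap_comm_esymm i j hij _))
  have hmem : ∀ q : MvPolynomial (Fin n) ℂ,
      MvPolynomial.aeval (fun t : Fin n =>
        (MvPolynomial.aeval (JMAux.Jalg n)) (MvPolynomial.esymm (Fin n) ℂ ((t : ℕ) + 1))) q ∈ Z := by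
    intro q
    induction q using MvPolynomial.induction_on with
    | C r => rw [MvPolynomial.aeval_C]; exact Z.algebraMap_mem r
    | add p q hp hq => rw [map_add]; exact add_mem hp hq
    | mul_X p t hp => rw [map_mul, MvPolynomial.aeval_X]; exact mul_mem hp (hpts t)
  exact (Subalgebra.mem_comap _ _ _).1 (hmem g)
end

section
/- The dual Cauchy identity in the bases of elementary and monomial symmetric functions: ∏_{i,j} (1 + x_i y_j) = ∑_λ e_λ(x) m_λ(y), where the sum is over all partitions λ, e_λ = ∏_i e_{λ_i} is the product of elementary symmetric functions, and m_λ is the monomial symmetric function. -/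
open MvPolynomial Finset

namespace DualCauchyAux

variable (N M : ℕ)

noncomputable def E (k : ℕ) : MvPolynomial (Fin N ⊕ Fin M) ℚ :=
  rename Sum.inl (esymm (Fin N) ℚ k)

noncomputable def trm (f : Fin M → ℕ) : MvPolynomial (Fin N ⊕ Fin M) ℚ :=
  (∏ j, E N M (f j)) * ∏ j, X (Sum.inr j) ^ f j

lemma E_eq_zero {k : ℕ} (hk : N < k) : E N M k = 0 := by
  rw [E, esymm, Finset.powersetCard_eq_empty.2 (by simpa using hk), sum_empty, map_zero]

lemma sum_count_eq_card {α : Type*} [Fintype α] [DecidableEq α] (m : Multiset α) :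
    ∑ j : α, m.count j = Multiset.card m := by
  rw [← Multiset.toFinset_sum_count_eq m]
  exact (Finset.sum_subset (subset_univ _) (fun j _ hj =>
    Multiset.count_eq_zero.2 (by simpa using hj))).symm

lemma sum_replicate_count {α : Type*} [Fintype α] [DecidableEq α] (m : Multiset α) :
    ∑ j : α, Multiset.replicate (m.count j) j = m := by
  rw [show (∑ j : α, Multiset.replicate (m.count j) j)
      = ∑ j ∈ m.toFinset, Multiset.replicate (m.count j) j from
    (Finset.sum_subset (subset_univ _) fun j _ hj => by
      rw [Multiset.count_eq_zero.2 (by simpa using hj)]; rfl).symm]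
  simp_rw [← Multiset.nsmul_singleton]
  exact Multiset.toFinset_sum_count_nsmul_eq m

lemma count_sum_replicate {α : Type*} [Fintype α] [DecidableEq α] (f : α → ℕ) (j : α) :
    (∑ i : α, Multiset.replicate (f i) i).count j = f j := by
  rw [Multiset.count_sum']
  simp [Multiset.count_replicate]

lemma card_finsetSum {α β : Type*} {s : Finset β} (g : β → Multiset α) :
    Multiset.card (∑ b ∈ s, g b) = ∑ b ∈ s, Multiset.card (g b) :=
  map_sum (⟨⟨Multiset.card, Multiset.card_zero⟩, Multiset.card_add⟩ : Multiset α →+ ℕ) g s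

/-- Step A, per column `j`. -/
lemma prod_one_add (j : Fin M) :
    (∏ i : Fin N, (1 + X (Sum.inl i) * X (Sum.inr j) : MvPolynomial (Fin N ⊕ Fin M) ℚ)) =
      ∑ k ∈ range (N + 1), E N M k * X (Sum.inr j) ^ k := by
  have h1 : (∏ i : Fin N, (1 + X (Sum.inl i) * X (Sum.inr j) : MvPolynomial (Fin N ⊕ Fin M) ℚ))
      = ∏ i : Fin N, ((X (Sum.inl i) * X (Sum.inr j) : MvPolynomial (Fin N ⊕ Fin M) ℚ) + 1) := by
    simp_rw [add_comm]
  rw [h1, Finset.prod_add]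
  simp only [prod_const_one, mul_one]
  rw [Finset.powerset_card_disjiUnion]; erw [Finset.sum_disjiUnion]
  rw [show (univ : Finset (Fin N)).card = N by simp]
  refine Finset.sum_congr rfl fun k hk => ?_
  rw [E, esymm, map_sum, Finset.sum_mul]
  refine Finset.sum_congr rfl fun t ht => ?_
  have hcard : t.card = k := (Finset.mem_powersetCard.1 ht).2
  rw [Finset.prod_mul_distrib, Finset.prod_const, hcard, map_prod]
  simp [rename_X]

/-- Step A. -/
lemma lhs_eq :
    (∏ i : Fin N, ∏ j : Fin M,
        (1 + X (Sum.inl i) * X (Sum.inr j) : MvPolynomial (Fin N ⊕ Fin M) ℚ)) =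
      ∑ f ∈ Fintype.piFinset (fun _ : Fin M => range (N + 1)), trm N M f := by
  rw [Finset.prod_comm]
  simp_rw [prod_one_add]
  rw [Finset.prod_univ_sum]
  refine Finset.sum_congr rfl fun f _ => ?_
  rw [trm, ← Finset.prod_mul_distrib]

/-- Step B, per multiset: the esymmPart term. -/
lemma esymmPart_ofSym {d : ℕ} (a : Sym (Fin M) d) :
    rename (Sum.inl : Fin N → Fin N ⊕ Fin M) (esymmPart (Fin N) ℚ (Nat.Partition.ofSym a)) =
      ∏ j : Fin M, E N M (a.1.count j) := by
  rw [esymmPart]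
  have h1 : (Nat.Partition.ofSym a).parts = a.1.dedup.map a.1.count := rfl
  rw [h1, Multiset.map_map]
  have h2 : (a.1.dedup.map (esymm (Fin N) ℚ ∘ fun j => a.1.count j)).prod
      = ∏ j ∈ a.1.toFinset, esymm (Fin N) ℚ (a.1.count j) := rfl
  rw [h2, map_prod]
  refine Finset.prod_subset (subset_univ _) fun j _ hj => ?_
  rw [Multiset.count_eq_zero.2 (by simpa using hj)]
  simp [E]

/-- multiset product of `Y`'s. -/
lemma multiset_prod_Y {d : ℕ} (a : Sym (Fin M) d) :
    (a.1.map fun j => (X (Sum.inr j) : MvPolynomial (Fin N ⊕ Fin M) ℚ)).prod =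
      ∏ j : Fin M, X (Sum.inr j) ^ a.1.count j := by
  rw [Finset.prod_multiset_map_count]
  refine Finset.prod_subset (subset_univ _) fun j _ hj => ?_
  rw [Multiset.count_eq_zero.2 (by simpa using hj), pow_zero]

/-- Step B per degree: the partition sum regroups as a sum over `Sym`. -/
lemma partition_sum_eq (d : ℕ) :
    (∑ μ : Nat.Partition d,
        rename (Sum.inl : Fin N → Fin N ⊕ Fin M) (esymmPart (Fin N) ℚ μ) *
          rename (Sum.inr : Fin M → Fin N ⊕ Fin M) (msymm (Fin M) ℚ μ)) =
      ∑ a : Sym (Fin M) d, trm N M (fun j => a.1.count j) := by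
  have hm : ∀ μ : Nat.Partition d,
      rename (Sum.inr : Fin M → Fin N ⊕ Fin M) (msymm (Fin M) ℚ μ) =
        ∑ a : {a : Sym (Fin M) d // Nat.Partition.ofSym a = μ},
          (a.1.1.map fun j => (X (Sum.inr j) : MvPolynomial (Fin N ⊕ Fin M) ℚ)).prod := by
    intro μ
    rw [msymm, map_sum]
    refine Finset.sum_congr rfl fun a _ => ?_
    rw [map_multiset_prod, Multiset.map_map]
    simp [rename_X]
  simp_rw [hm, Finset.mul_sum]
  rw [Finset.sum_sigma', Finset.univ_sigma_univ]
  refine Fintype.sum_equiv (Equiv.sigmaFiberEquiv (fun a : Sym (Fin M) d => Nat.Partition.ofSym a)) _ _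
    fun p => ?_
  obtain ⟨μ, a, rfl⟩ := p
  simp only [Equiv.sigmaFiberEquiv, Equiv.coe_fn_mk]
  rw [trm, esymmPart_ofSym, multiset_prod_Y]

/-- Step C per degree. -/
lemma sym_sum_eq (d : ℕ) :
    (∑ a : Sym (Fin M) d, trm N M (fun j => a.1.count j)) =
      ∑ f ∈ (Fintype.piFinset (fun _ : Fin M => range (N + 1))).filter
          (fun f => ∑ j, f j = d), trm N M f := by
  have hzero : ∀ (f : Fin M → ℕ), (¬ ∀ j, f j ≤ N) → trm N M f = 0 := by
    intro f hf
    push_neg at hf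
    obtain ⟨j, hj⟩ := hf
    rw [trm, Finset.prod_eq_zero (mem_univ j) (E_eq_zero N M hj), zero_mul]
  rw [← Finset.sum_filter_of_ne (p := fun a : Sym (Fin M) d => ∀ j, a.1.count j ≤ N)
    (fun a _ h => by by_contra hc; exact h (hzero _ hc))]
  refine Finset.sum_bij' (fun a _ => fun j => a.1.count j)
    (fun f hf => ⟨∑ j : Fin M, Multiset.replicate (f j) j, ?_⟩) ?_ ?_ ?_ ?_ ?_
  · rw [card_finsetSum]
    simp only [Multiset.card_replicate]
    exact ((Finset.mem_filter.1 hf).2)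
  · intro a ha
    rw [Finset.mem_filter]
    constructor
    · rw [Fintype.mem_piFinset]
      intro j
      rw [Finset.mem_range, Nat.lt_succ_iff]
      exact (Finset.mem_filter.1 ha).2 j
    · rw [sum_count_eq_card, a.2]
  · intro f hf
    refine Finset.mem_filter.2 ?_
    refine ⟨mem_univ _, fun j => ?_⟩
    rw [count_sum_replicate]
    have := (Fintype.mem_piFinset.1 (Finset.mem_filter.1 hf).1) j
    rw [Finset.mem_range, Nat.lt_succ_iff] at this
    exact this
  · intro a ha
    exact Subtype.ext (sum_replicate_count a.1)
  · intro f hf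
    funext j
    exact count_sum_replicate f j
  · intro a ha
    rfl

theorem main :
    (∏ i : Fin N, ∏ j : Fin M,
        (1 + X (Sum.inl i) * X (Sum.inr j) : MvPolynomial (Fin N ⊕ Fin M) ℚ)) =
      ∑ d ∈ Finset.range (N * M + 1), ∑ μ : Nat.Partition d,
        rename (Sum.inl : Fin N → Fin N ⊕ Fin M) (esymmPart (Fin N) ℚ μ) *
          rename (Sum.inr : Fin M → Fin N ⊕ Fin M) (msymm (Fin M) ℚ μ) := by
  rw [lhs_eq]
  simp_rw [partition_sum_eq, sym_sum_eq]
  have hmap : ∀ f ∈ Fintype.piFinset (fun _ : Fin M => range (N + 1)),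
      (∑ j, f j) ∈ Finset.range (N * M + 1) := by
    intro f hf
    rw [Finset.mem_range, Nat.lt_succ_iff]
    calc ∑ j, f j ≤ ∑ _j : Fin M, N := Finset.sum_le_sum fun j _ => by
          have := (Fintype.mem_piFinset.1 hf) j
          rw [Finset.mem_range, Nat.lt_succ_iff] at this
          exact this
      _ = N * M := by simp [mul_comm]
  exact (Finset.sum_fiberwise_of_maps_to hmap _).symm

end DualCauchyAux

/-- dual Cauchy identity, in the bases of elementary and monomial
symmetric functions, for variable sets `x = (x_1, …, x_N)`, `y = (y_1, …, y_M)`: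
`∏_{i,j} (1 + x_i y_j) = ∑_λ e_λ(x) m_λ(y)`. Only partitions `λ` with `|λ| ≤ N·M`
contribute (for larger `λ`, `e_λ(x) m_λ(y) = 0`), so the sum over all partitions is
written as the finite sum over partitions of each `d ≤ N·M`. -/
theorem dual_cauchy_esymm_msymm (N M : ℕ) :
    (∏ i : Fin N, ∏ j : Fin M,
        (1 + X (Sum.inl i) * X (Sum.inr j) : MvPolynomial (Fin N ⊕ Fin M) ℚ)) =
      ∑ d ∈ Finset.range (N * M + 1), ∑ μ : Nat.Partition d,
        rename (Sum.inl : Fin N → Fin N ⊕ Fin M) (esymmPart (Fin N) ℚ μ) *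
          rename (Sum.inr : Fin M → Fin N ⊕ Fin M) (msymm (Fin M) ℚ μ) := by
  exact DualCauchyAux.main N M
end

section
/- Symmetrized strictly-ordered geometric sum identity: for indeterminates x_1, ..., x_k with |x_i| < 1, ∑_{σ ∈ S_k} ∑_{0 ≤ i_1 < i_2 < ... < i_k} x_{σ(1)}^{i_1} ⋯ x_{σ(k)}^{i_k} = ∑_{σ ∈ S_k} (x_{σ(1)}^{k−1} x_{σ(2)}^{k−2} ⋯ x_{σ(k−1)}) / ((1 − x_{σ(1)})(1 − x_{σ(1)}x_{σ(2)}) ⋯ (1 − x_{σ(1)}⋯x_{σ(k)})). -/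
open Finset

variable {k : ℕ}

private def phiAux (g : Fin k → ℕ) : Fin k → ℕ := fun j => (j : ℕ) + ∑ i ∈ Iic j, g i

private lemma phiAux_strictMono (g : Fin k → ℕ) : StrictMono (phiAux g) := by
  intro a b hab
  have h1 : (a : ℕ) < b := hab
  have h2 : ∑ i ∈ Iic a, g i ≤ ∑ i ∈ Iic b, g i :=
    Finset.sum_le_sum_of_subset (Finset.Iic_subset_Iic.mpr hab.le)
  simpa [phiAux] using Nat.add_lt_add_of_lt_of_le h1 h2

private lemma Iic_bot_eq (j : Fin k) (hj : (j : ℕ) = 0) : Finset.Iic j = {j} := by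
  ext i
  simp only [Finset.mem_Iic, Finset.mem_singleton, Fin.le_def, hj, Nat.le_zero]
  constructor
  · intro h; exact Fin.ext (by omega)
  · intro h; simp [h, hj]

private lemma Iic_succ_eq (j : Fin k) (n : ℕ) (hj : (j : ℕ) = n + 1) (hn : n < k) :
    Finset.Iic j = insert j (Finset.Iic (⟨n, hn⟩ : Fin k)) := by
  ext i
  simp only [Finset.mem_Iic, Finset.mem_insert, Fin.le_def, hj]
  constructor
  · intro h
    rcases Nat.le_succ_iff.mp (by simpa using h) with h' | h'
    · right; simpa using Nat.lt_succ_iff.mp (Nat.lt_succ_of_le h')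
    · left; exact Fin.ext (by omega)
  · rintro (rfl | h)
    · simp [hj]
    · omega

private lemma phiAux_injective : Function.Injective (phiAux (k := k)) := by
  intro g g' h
  have hsum : ∀ j : Fin k, ∑ i ∈ Iic j, g i = ∑ i ∈ Iic j, g' i := by
    intro j
    have := congrFun h j
    simpa [phiAux] using this
  funext j
  rcases Nat.eq_zero_or_eq_succ_pred (j : ℕ) with h0 | h0
  · have := hsum j
    rwa [Iic_bot_eq j h0, Finset.sum_singleton, Finset.sum_singleton] at this
  · set n := (j : ℕ) - 1 with hn
    have hj : (j : ℕ) = n + 1 := h0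
    have hnk : n < k := by have := j.2; omega
    have hmem : j ∉ Finset.Iic (⟨n, hnk⟩ : Fin k) := by
      simp [Fin.le_def, hj]
    have h1 := hsum j
    rw [Iic_succ_eq j n hj hnk, Finset.sum_insert hmem, Finset.sum_insert hmem,
      hsum ⟨n, hnk⟩] at h1
    omega

private lemma phiAux_surjective :
    ∀ f : Fin k → ℕ, StrictMono f → ∃ g, phiAux g = f := by
  intro f hf
  refine ⟨fun j => if hj : (j : ℕ) = 0 then f j
    else f j - f ⟨(j : ℕ) - 1, by have := j.2; omega⟩ - 1, ?_⟩
  set g : Fin k → ℕ := fun j => if hj : (j : ℕ) = 0 then f j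
    else f j - f ⟨(j : ℕ) - 1, by have := j.2; omega⟩ - 1 with hg
  have key : ∀ n : ℕ, ∀ j : Fin k, (j : ℕ) = n → (j : ℕ) + ∑ i ∈ Iic j, g i = f j := by
    intro n
    induction n with
    | zero =>
      intro j hj
      rw [Iic_bot_eq j hj, Finset.sum_singleton, hj]
      simp [hg, hj]
    | succ n ih =>
      intro j hj
      have hnk : n < k := by have := j.2; omega
      set jp : Fin k := ⟨n, hnk⟩ with hjp
      have hmem : j ∉ Finset.Iic jp := by simp [Fin.le_def, hj, hjp]
      have hlt : jp.castSucc < jp.succ ∨ True := Or.inr trivial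
      have hstep : f jp + 1 ≤ f j := hf (show jp < j by simp [Fin.lt_def, hjp, hj])
      have hih : (n : ℕ) + ∑ i ∈ Iic jp, g i = f jp := ih jp rfl
      have hgj : g j = f j - f jp - 1 := by
        simp only [hg]
        rw [dif_neg (by omega)]
        congr 2
        congr 1
        apply Fin.ext
        simp only [hjp, Fin.val_mk]
        omega
      rw [Iic_succ_eq j n hj hnk, Finset.sum_insert hmem, hgj, hj]
      omega
  funext j
  exact key (j : ℕ) j rfl


private lemma summable_pi_geom_real : ∀ (n : ℕ) (Q : Fin n → ℝ), (∀ i, 0 ≤ Q i) →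
    (∀ i, Q i < 1) → Summable (fun g : Fin n → ℕ => ∏ i, Q i ^ g i) := by
  intro n
  induction n with
  | zero => intro Q _ _; exact Summable.of_finite
  | succ n ih =>
    intro Q hQ0 hQ1
    have hs : Summable (fun p : ℕ × (Fin n → ℕ) =>
        Q 0 ^ p.1 * ∏ i : Fin n, Q i.succ ^ p.2 i) :=
      Summable.mul_of_nonneg (f := fun m : ℕ => Q 0 ^ m)
        (g := fun g : Fin n → ℕ => ∏ i : Fin n, Q i.succ ^ g i)
        (summable_geometric_of_lt_one (hQ0 0) (hQ1 0))
        (ih (fun i => Q i.succ) (fun i => hQ0 _) (fun i => hQ1 _))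
        (fun m => pow_nonneg (hQ0 0) m)
        (fun g => Finset.prod_nonneg fun i _ => pow_nonneg (hQ0 _) _)
    have := (Fin.consEquiv (fun _ : Fin (n+1) => ℕ)).symm.summable_iff.mpr hs
    apply this.congr
    intro g
    simp only [Function.comp_apply, Fin.consEquiv_symm_apply]
    rw [Fin.prod_univ_succ]
    rfl

private lemma summable_pi_geom (n : ℕ) (P : Fin n → ℂ) (h : ∀ i, ‖P i‖ < 1) :
    Summable (fun g : Fin n → ℕ => ∏ i, P i ^ g i) := by
  apply Summable.of_norm
  have := summable_pi_geom_real n (fun i => ‖P i‖) (fun i => norm_nonneg _) h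
  apply this.congr
  intro g
  simp [norm_prod, norm_pow]

private lemma tsum_pi_geom : ∀ (n : ℕ) (P : Fin n → ℂ), (∀ i, ‖P i‖ < 1) →
    ∑' g : Fin n → ℕ, ∏ i, P i ^ g i = ∏ i, (1 - P i)⁻¹ := by
  intro n
  induction n with
  | zero =>
    intro P _
    rw [tsum_eq_single (default : Fin 0 → ℕ) (fun g hg => absurd (Subsingleton.elim g default) hg)]
    simp
  | succ n ih =>
    intro P hP
    have e := Fin.consEquiv (fun _ : Fin (n+1) => ℕ)
    have h1 : ∑' g : Fin (n+1) → ℕ, ∏ i, P i ^ g i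
        = ∑' p : ℕ × (Fin n → ℕ), P 0 ^ p.1 * ∏ i : Fin n, P i.succ ^ p.2 i := by
      rw [← (Fin.consEquiv (fun _ : Fin (n+1) => ℕ)).tsum_eq]
      apply tsum_congr
      intro p
      rw [Fin.prod_univ_succ]
      simp [Fin.consEquiv_apply]
    have hsum : Summable (fun p : ℕ × (Fin n → ℕ) =>
        P 0 ^ p.1 * ∏ i : Fin n, P i.succ ^ p.2 i) := by
      have h2 := (summable_pi_geom (n+1) P hP).comp_injective
        (Fin.consEquiv (fun _ : Fin (n+1) => ℕ)).injective
      apply h2.congr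
      intro p
      simp only [Function.comp_apply, Fin.consEquiv_apply]
      rw [Fin.prod_univ_succ]
      simp
    rw [h1, Summable.tsum_prod' hsum hsum.prod_factor]
    have h3 : ∀ a : ℕ, ∑' b : Fin n → ℕ, P 0 ^ a * ∏ i : Fin n, P i.succ ^ b i
        = P 0 ^ a * ∏ i : Fin n, (1 - P i.succ)⁻¹ := by
      intro a
      rw [tsum_mul_left, ih (fun i => P i.succ) (fun i => hP _)]
    rw [tsum_congr h3, tsum_mul_right, tsum_geometric_of_norm_lt_one (hP 0),
      Fin.prod_univ_succ]

private lemma norm_prod_Ici_lt_one (y : Fin k → ℂ) (h1 : ∀ i, ‖y i‖ < 1) (i : Fin k) :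
    ‖∏ j ∈ Ici i, y j‖ < 1 := by
  rw [norm_prod]
  have hmem : i ∈ Ici i := mem_Ici.mpr le_rfl
  rw [← Finset.mul_prod_erase _ _ hmem]
  calc ‖y i‖ * ∏ j ∈ (Ici i).erase i, ‖y j‖ ≤ ‖y i‖ * 1 := by
        apply mul_le_mul_of_nonneg_left _ (norm_nonneg _)
        exact Finset.prod_le_one (fun j _ => norm_nonneg _) (fun j _ => (h1 j).le)
    _ = ‖y i‖ := mul_one _
    _ < 1 := h1 i

private lemma main_aux (y : Fin k → ℂ) (h1 : ∀ i, ‖y i‖ < 1) :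
    ∑' t : {f : Fin k → ℕ // StrictMono f}, ∏ j : Fin k, y j ^ (t.1 j)
      = (∏ j : Fin k, y j ^ (j : ℕ)) / ∏ i : Fin k, (1 - ∏ j ∈ Ici i, y j) := by
  have hbij : Function.Bijective (fun g : Fin k → ℕ =>
      (⟨phiAux g, phiAux_strictMono g⟩ : {f : Fin k → ℕ // StrictMono f})) := by
    constructor
    · intro a b hab
      exact phiAux_injective (congrArg Subtype.val hab)
    · rintro ⟨f, hf⟩
      obtain ⟨g, hg⟩ := phiAux_surjective f hf
      exact ⟨g, Subtype.ext hg⟩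
  rw [← (Equiv.ofBijective _ hbij).tsum_eq]
  have hterm : ∀ g : Fin k → ℕ, (∏ j : Fin k, y j ^ (phiAux g j))
      = (∏ j : Fin k, y j ^ (j : ℕ)) * ∏ i : Fin k, (∏ j ∈ Ici i, y j) ^ g i := by
    intro g
    have hstep : ∀ j : Fin k, y j ^ (phiAux g j) = y j ^ (j : ℕ) * ∏ i ∈ Iic j, y j ^ g i := by
      intro j
      rw [phiAux, pow_add, Finset.prod_pow_eq_pow_sum]
    rw [Finset.prod_congr rfl (fun j _ => hstep j), Finset.prod_mul_distrib]
    congr 1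
    rw [show (univ : Finset (Fin k)) = univ from rfl]
    rw [Finset.prod_comm' (t := fun j => Iic j) (s' := fun i => Ici i) (t' := univ)
      (fun j i => by simp)]
    exact Finset.prod_congr rfl fun i _ => Finset.prod_pow _ _ _
  calc ∑' g : Fin k → ℕ, ∏ j : Fin k, y j ^ (phiAux g j)
      = ∑' g : Fin k → ℕ, (∏ j : Fin k, y j ^ (j : ℕ)) *
          ∏ i : Fin k, (∏ j ∈ Ici i, y j) ^ g i := tsum_congr hterm
    _ = (∏ j : Fin k, y j ^ (j : ℕ)) * ∑' g : Fin k → ℕ,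
          ∏ i : Fin k, (∏ j ∈ Ici i, y j) ^ g i := tsum_mul_left
    _ = (∏ j : Fin k, y j ^ (j : ℕ)) * ∏ i : Fin k, (1 - ∏ j ∈ Ici i, y j)⁻¹ := by
        rw [tsum_pi_geom k _ (norm_prod_Ici_lt_one y h1)]
    _ = (∏ j : Fin k, y j ^ (j : ℕ)) / ∏ i : Fin k, (1 - ∏ j ∈ Ici i, y j) := by
        rw [Finset.prod_inv_distrib, div_eq_mul_inv]

private lemma filter_le_eq_Iic (m : Fin k) :
    (Finset.univ.filter (fun j : Fin k => j ≤ m)) = Finset.Iic m := by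
  ext j; simp

private lemma inner_rev (z : Fin k → ℂ) (m : Fin k) :
    ∏ j ∈ Iic m, z j.rev = ∏ j ∈ Ici m.rev, z j := by
  rw [← filter_le_eq_Iic, Finset.prod_filter]
  rw [show (Ici m.rev : Finset (Fin k)) = univ.filter (fun j => m.rev ≤ j) by ext j; simp,
    Finset.prod_filter]
  apply Fintype.prod_equiv Fin.revPerm
  intro j
  simp only [Fin.revPerm_apply]
  have : j ≤ m ↔ m.rev ≤ j.rev := by rw [Fin.rev_le_rev]
  rw [if_congr this rfl rfl]

/-- symmetrized strictly-ordered geometric sum identity: for complex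
numbers `x_1, …, x_k` with `0 < |x_i| < 1`,
`∑_{σ ∈ S_k} ∑_{0 ≤ i_1 < ⋯ < i_k} x_{σ(1)}^{i_1} ⋯ x_{σ(k)}^{i_k}
 = ∑_{σ ∈ S_k} (x_{σ(1)}^{k-1} x_{σ(2)}^{k-2} ⋯ x_{σ(k-1)}) /
   ((1 - x_{σ(1)})(1 - x_{σ(1)}x_{σ(2)}) ⋯ (1 - x_{σ(1)} ⋯ x_{σ(k)}))`. -/
theorem symmetrized_strict_geometric_sum (k : ℕ) (x : Fin k → ℂ)
    (h0 : ∀ i, 0 < ‖x i‖) (h1 : ∀ i, ‖x i‖ < 1) :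
    (∑ σ : Equiv.Perm (Fin k),
        ∑' t : {f : Fin k → ℕ // StrictMono f}, ∏ j : Fin k, x (σ j) ^ (t.1 j)) =
      ∑ σ : Equiv.Perm (Fin k),
        (∏ j : Fin k, x (σ j) ^ (k - 1 - (j : ℕ))) /
          ∏ m : Fin k, (1 - ∏ j ∈ Finset.univ.filter (fun j : Fin k => j ≤ m), x (σ j)) := by
  have step1 : (∑ σ : Equiv.Perm (Fin k),
      ∑' t : {f : Fin k → ℕ // StrictMono f}, ∏ j : Fin k, x (σ j) ^ (t.1 j)) =
      ∑ σ : Equiv.Perm (Fin k),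
        (∏ j : Fin k, x (σ j) ^ (j : ℕ)) / ∏ i : Fin k, (1 - ∏ j ∈ Ici i, x (σ j)) :=
    Finset.sum_congr rfl fun σ _ => main_aux (fun j => x (σ j)) (fun i => h1 _)
  rw [step1]
  apply Fintype.sum_equiv (Equiv.mulRight Fin.revPerm)
  intro σ
  simp only [Equiv.coe_mulRight, filter_le_eq_Iic]
  set τ : Equiv.Perm (Fin k) := σ * Fin.revPerm with hτ
  have happ : ∀ j : Fin k, τ j = σ j.rev := fun j => rfl
  have hnum : (∏ j : Fin k, x (σ j) ^ (j : ℕ))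
      = ∏ j : Fin k, x (τ j) ^ (k - 1 - (j : ℕ)) := by
    apply Fintype.prod_equiv Fin.revPerm
    intro j
    simp only [Fin.revPerm_apply, happ, Fin.rev_rev]
    congr 1
    rw [Fin.val_rev]
    have := j.2
    omega
  have hden : (∏ i : Fin k, (1 - ∏ j ∈ Ici i, x (σ j)))
      = ∏ m : Fin k, (1 - ∏ j ∈ Iic m, x (τ j)) := by
    apply Fintype.prod_equiv Fin.revPerm
    intro i
    simp only [Fin.revPerm_apply]
    congr 1
    have : (∏ j ∈ Iic i.rev, x (τ j)) = ∏ j ∈ Iic i.rev, x (σ j.rev) :=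
      Finset.prod_congr rfl fun j _ => by rw [happ]
    rw [this]
    rw [inner_rev (fun j => x (σ j)) i.rev, Fin.rev_rev]
  rw [hnum, hden]
end
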